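/- arXiv:1911.02370 — 4 statements merged into one kernel-verified Lean document; each statement's English description precedes it below -/
import Mathlib

section
/- Let f : ℝ → ℝ≥0∞ be an even function that is antitone (decreasing) on [0, ∞) and integrable on a symmetric open interval I = (-c, c). Then for every measurable subset E ⊆ I, the integral ∫_E f dλ ≤ 2 ∫_0^{(λ E)/2} f(x) dx, where λ is Lebesgue measure. -/
open MeasureTheory Set
open scoped ENNReal

/-- Goldberg–Ostrovskii rearrangement lemma: for an even function `f`
decreasing on `[0,∞)` and integrable on a symmetric open interval `(-c, c)`,
the integral over any measurable `E ⊆ (-c, c)` is at most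
`2 ∫_0^{(λ E)/2} f`. -/
theorem small_arcs_rearrangement (f : ℝ → ℝ≥0∞) (c : ℝ) (hc : 0 < c)
    (heven : ∀ x : ℝ, f (-x) = f x)
    (hanti : AntitoneOn f (Set.Ici (0 : ℝ)))
    (hint : ∫⁻ x in Set.Ioo (-c) c, f x < ⊤)
    (E : Set ℝ) (hE : MeasurableSet E) (hEI : E ⊆ Set.Ioo (-c) c) :
    ∫⁻ x in E, f x ≤ 2 * ∫⁻ x in Set.Ioo (0 : ℝ) ((volume E).toReal / 2), f x := by
  set m := volume E with hm
  have hmfin : m ≠ ⊤ := by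
    refine ne_top_of_le_ne_top ?_ (measure_mono hEI)
    simp [Real.volume_Ioo]
  set r : ℝ := m.toReal / 2 with hrdef
  have hr0 : 0 ≤ r := by positivity
  rcases eq_or_lt_of_le hr0 with h0 | hrpos
  · -- r = 0, so m = 0
    have hm0 : m = 0 := by
      have h2 : m.toReal = 0 := by
        have : m.toReal / 2 = 0 := h0.symm
        linarith
      exact (ENNReal.toReal_eq_zero_iff m).mp h2 |>.resolve_right hmfin
    have : volume.restrict E = 0 := Measure.restrict_eq_zero.mpr hm0
    rw [this, lintegral_zero_measure]
    exact zero_le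
  -- case f r = ⊤
  by_cases hfr : f r = ⊤
  · have : (⊤ : ℝ≥0∞) ≤ ∫⁻ x in Set.Ioo (0 : ℝ) r, f x := by
      calc (⊤ : ℝ≥0∞) = ∫⁻ _ in Set.Ioo (0 : ℝ) r, ⊤ := by
            rw [setLIntegral_const, Real.volume_Ioo,
              ENNReal.top_mul (ENNReal.ofReal_pos.mpr (by linarith)).ne']
        _ ≤ ∫⁻ x in Set.Ioo (0 : ℝ) r, f x := by
            refine lintegral_mono_ae ?_
            filter_upwards [ae_restrict_mem measurableSet_Ioo] with x hx
            have : f x = ⊤ := by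
              have := hanti (mem_Ici.mpr hx.1.le) (mem_Ici.mpr hr0) hx.2.le
              rw [hfr] at this; exact top_le_iff.mp this
            simp [this]
    have hT : ∫⁻ x in Set.Ioo (0 : ℝ) r, f x = ⊤ := top_le_iff.mp this
    rw [hT]
    simp
  -- main case
  have hfabs : ∀ x : ℝ, f x = f |x| := by
    intro x
    rcases abs_choice x with h | h
    · rw [h]
    · rw [h, heven]
  set B := Set.Ioo (-r) r with hB
  have hBmeas : MeasurableSet B := measurableSet_Ioo
  have hvolB : volume B = m := by
    rw [hB, Real.volume_Ioo]
    rw [← ENNReal.ofReal_toReal hmfin]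
    congr 1
    rw [hrdef]; ring
  -- vol (E \ B) = vol (B \ E)
  have hinterfin : volume (E ∩ B) ≠ ⊤ :=
    ne_top_of_le_ne_top hmfin (measure_mono inter_subset_left)
  have hdiffeq : volume (E \ B) = volume (B \ E) := by
    have h1 : volume (E ∩ B) + volume (E \ B) = m := by
      rw [hm, measure_inter_add_diff E hBmeas]
    have h2 : volume (E ∩ B) + volume (B \ E) = m := by
      rw [inter_comm, ← hvolB, measure_inter_add_diff B hE]
    exact (ENNReal.add_right_inj hinterfin).mp (h1.trans h2.symm)
  -- bound on E \ B
  have hout : ∀ x ∈ E \ B, f x ≤ f r := by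
    intro x hx
    have hxB : x ∉ B := hx.2
    rw [hB, Set.mem_Ioo, not_and_or] at hxB
    have hxabs : r ≤ |x| := by
      rcases hxB with h | h
      · push_neg at h; rw [abs_of_nonpos (by linarith)]; linarith
      · push_neg at h; rw [abs_of_nonneg (by linarith)]; exact h
    rw [hfabs x]
    exact hanti (mem_Ici.mpr hr0) (mem_Ici.mpr (hr0.trans hxabs)) hxabs
  have hin : ∀ x ∈ B \ E, f r ≤ f x := by
    intro x hx
    have hxabs : |x| ≤ r := by
      have := hx.1
      rw [hB, Set.mem_Ioo] at this
      rw [abs_le]; constructor <;> linarith [this.1, this.2]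
    rw [hfabs x]
    exact hanti (mem_Ici.mpr (abs_nonneg x)) (mem_Ici.mpr hr0) hxabs
  have step1 : ∫⁻ x in E \ B, f x ≤ ∫⁻ x in B \ E, f x := by
    calc ∫⁻ x in E \ B, f x ≤ ∫⁻ _ in E \ B, f r := by
          refine lintegral_mono_ae ?_
          filter_upwards [ae_restrict_mem (hE.diff hBmeas)] with x hx using hout x hx
      _ = f r * volume (E \ B) := by rw [setLIntegral_const]
      _ = f r * volume (B \ E) := by rw [hdiffeq]
      _ = ∫⁻ _ in B \ E, f r := by rw [setLIntegral_const]
      _ ≤ ∫⁻ x in B \ E, f x := by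
          refine lintegral_mono_ae ?_
          filter_upwards [ae_restrict_mem (hBmeas.diff hE)] with x hx using hin x hx
  have hEle : ∫⁻ x in E, f x ≤ ∫⁻ x in B, f x := by
    calc ∫⁻ x in E, f x = ∫⁻ x in (E ∩ B) ∪ (E \ B), f x := by
          rw [inter_union_diff]
      _ = (∫⁻ x in E ∩ B, f x) + ∫⁻ x in E \ B, f x :=
          lintegral_union (hE.diff hBmeas)
            (Set.disjoint_left.mpr fun x hx hx' => hx'.2 hx.2)
      _ ≤ (∫⁻ x in E ∩ B, f x) + ∫⁻ x in B \ E, f x := add_le_add_right step1 _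
      _ = (∫⁻ x in B ∩ E, f x) + ∫⁻ x in B \ E, f x := by rw [inter_comm]
      _ = ∫⁻ x in (B ∩ E) ∪ (B \ E), f x :=
          (lintegral_union (hBmeas.diff hE)
            (Set.disjoint_left.mpr fun x hx hx' => hx'.2 hx.2)).symm
      _ = ∫⁻ x in B, f x := by rw [inter_union_diff]
  -- reflection: ∫ over Ioo (-r) 0 equals ∫ over Ioo 0 r
  have hrefl : ∫⁻ x in Set.Ioo (-r) 0, f x = ∫⁻ x in Set.Ioo (0:ℝ) r, f x := by
    have hmp : MeasurePreserving (fun x : ℝ => -x) volume volume :=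
      Measure.measurePreserving_neg volume
    have hemb : MeasurableEmbedding (fun x : ℝ => -x) :=
      (Homeomorph.neg ℝ).measurableEmbedding
    have := hmp.setLIntegral_comp_emb hemb f (Set.Ioo (0:ℝ) r)
    have himg : (fun x : ℝ => -x) '' Set.Ioo (0:ℝ) r = Set.Ioo (-r) 0 := by
      ext y; simp [Set.mem_image, Set.mem_Ioo]
    rw [himg] at this
    rw [← this]
    refine lintegral_congr fun x => ?_
    exact heven x
  have hBsplit : ∫⁻ x in B, f x = 2 * ∫⁻ x in Set.Ioo (0:ℝ) r, f x := by
    have hunion : Set.Ioo (-r) 0 ∪ Set.Ico 0 r = B := by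
      rw [hB]; exact Set.Ioo_union_Ico_eq_Ioo (by linarith) hr0
    have hIco : ∫⁻ x in Set.Ico (0:ℝ) r, f x = ∫⁻ x in Set.Ioo (0:ℝ) r, f x :=
      setLIntegral_congr (Ioo_ae_eq_Ico (α := ℝ) (a := 0) (b := r)).symm
    calc ∫⁻ x in B, f x = ∫⁻ x in Set.Ioo (-r) 0 ∪ Set.Ico 0 r, f x := by rw [hunion]
      _ = (∫⁻ x in Set.Ioo (-r) 0, f x) + ∫⁻ x in Set.Ico 0 r, f x :=
          lintegral_union measurableSet_Ico (by
            refine Set.disjoint_left.mpr fun x hx hx' => ?_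
            exact absurd hx'.1 (not_le.mpr hx.2))
      _ = 2 * ∫⁻ x in Set.Ioo (0:ℝ) r, f x := by
          rw [hrefl, hIco, two_mul]
  calc ∫⁻ x in E, f x ≤ ∫⁻ x in B, f x := hEle
    _ = 2 * ∫⁻ x in Set.Ioo (0:ℝ) r, f x := hBsplit
end

section
/- Let b ∈ (0,1], R ≥ 1, and let E ⊆ [0, R] be measurable with m := λ(E) ∈ (0, R]. Then m + min(m, 3bR) · ln(3ebR / min(m, 3bR)) ≤ (2 + ln 3) · m · ln(eR / m). -/
open MeasureTheory Real Set

/-- Remark 1 (inequality (1.8)): for `b ∈ (0,1]`, `R ≥ 1` and measurable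
`E ⊆ [0,R]` with `m := λ(E) ∈ (0, R]`, one has
`m + min(m,3bR)·ln(3ebR/min(m,3bR)) ≤ (2 + ln 3)·m·ln(eR/m)`. -/
theorem M_compress_general (b R m : ℝ) (hb : b ∈ Set.Ioc (0 : ℝ) 1) (hR : 1 ≤ R)
    (E : Set ℝ) (hE : MeasurableSet E) (hER : E ⊆ Set.Icc 0 R)
    (hm : (volume E).toReal = m) (hm0 : 0 < m) (hmR : m ≤ R) :
    m + min m (3 * b * R) * Real.log (3 * Real.exp 1 * b * R / min m (3 * b * R)) ≤
      (2 + Real.log 3) * m * Real.log (Real.exp 1 * R / m) := by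
  obtain ⟨hb0, hb1⟩ := hb
  have hR0 : (0 : ℝ) < R := lt_of_lt_of_le one_pos hR
  have h1 : Real.log (Real.exp 1 * R / m) = 1 + Real.log R - Real.log m := by
    rw [Real.log_div (by positivity) hm0.ne',
      Real.log_mul (Real.exp_ne_zero 1) hR0.ne', Real.log_exp]
  have hL : 0 ≤ Real.log R - Real.log m :=
    sub_nonneg.mpr (Real.log_le_log hm0 hmR)
  have h3 : 0 ≤ Real.log 3 := Real.log_nonneg (by norm_num)
  rcases le_or_gt m (3 * b * R) with h | h
  · rw [min_eq_left h, h1]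
    have h2 : Real.log (3 * Real.exp 1 * b * R / m)
        = Real.log 3 + 1 + Real.log b + Real.log R - Real.log m := by
      rw [Real.log_div (by positivity) hm0.ne',
        Real.log_mul (by positivity) hR0.ne',
        Real.log_mul (by positivity) hb0.ne',
        Real.log_mul (by norm_num) (Real.exp_ne_zero 1), Real.log_exp]
    rw [h2]
    have hlb : Real.log b ≤ 0 := Real.log_nonpos hb0.le hb1
    nlinarith [mul_nonneg hm0.le hL, mul_nonneg h3 hL, mul_nonneg (mul_nonneg hm0.le h3) hL]
  · rw [min_eq_right h.le, h1]
    have hbR : 0 < 3 * b * R := by positivity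
    have h2 : 3 * Real.exp 1 * b * R / (3 * b * R) = Real.exp 1 := by
      field_simp
    rw [h2, Real.log_exp]
    nlinarith [mul_nonneg hm0.le hL, mul_nonneg (mul_nonneg hm0.le h3) hL, mul_nonneg h3 hL]
end

section
/- For any b ∈ (0, 1], any R > 0, any measurable set E ⊆ ℝ, and any t ∈ ℝ, the integral ∫_{E} max(0, ln(3bR/|s - t|)) ds ≤ min(λ(E), 6bR) · ln(6ebR / min(λ(E), 6bR)), with the convention that the right side is 0 when λ(E) = 0. -/
open MeasureTheory Real Set
open scoped ENNReal

lemma aux_integrableOn_min_exp (mr L a : ℝ) (hmr : 0 ≤ mr) (hL : 0 < L) :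
    IntegrableOn (fun u => min mr (L * Real.exp (-u))) (Ioi a) := by
  have hg : IntegrableOn (fun u : ℝ => L * Real.exp (-1 * u)) (Ioi a) :=
    (exp_neg_integrableOn_Ioi a (by norm_num : (0:ℝ) < 1)).const_mul L
  refine Integrable.mono hg ?_ ?_
  · exact (continuous_const.min (continuous_const.mul
      (Real.continuous_exp.comp continuous_neg))).aestronglyMeasurable
  · filter_upwards with u
    have hx : 0 < L * Real.exp (-u) := by positivity
    rw [Real.norm_eq_abs, Real.norm_eq_abs, abs_of_nonneg (le_min hmr hx.le),
      abs_of_nonneg (by positivity : (0:ℝ) ≤ L * Real.exp (-1 * u))]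
    simpa using min_le_right mr (L * Real.exp (-u))

lemma aux_min_exp_integral (L mr : ℝ) (hmr : 0 < mr) (hL : mr ≤ L) :
    ∫ u in Ioi (0:ℝ), min mr (L * Real.exp (-u)) =
      mr * Real.log (Real.exp 1 * L / mr) := by
  have hLpos : 0 < L := hmr.trans_le hL
  set u0 := Real.log (L / mr) with hu0
  have hu0nn : 0 ≤ u0 := Real.log_nonneg ((one_le_div hmr).2 hL)
  have hexpu0 : Real.exp (-u0) = mr / L := by
    rw [hu0, Real.exp_neg, Real.exp_log (by positivity)]
    field_simp
  have hsplit : Ioc (0:ℝ) u0 ∪ Ioi u0 = Ioi 0 := Ioc_union_Ioi_eq_Ioi hu0nn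
  have hdisj : Disjoint (Ioc (0:ℝ) u0) (Ioi u0) := Ioc_disjoint_Ioi le_rfl
  have hint1 : IntegrableOn (fun u => min mr (L * Real.exp (-u))) (Ioc (0:ℝ) u0) :=
    (aux_integrableOn_min_exp mr L 0 hmr.le hLpos).mono_set Ioc_subset_Ioi_self
  have hint2 : IntegrableOn (fun u => min mr (L * Real.exp (-u))) (Ioi u0) :=
    aux_integrableOn_min_exp mr L u0 hmr.le hLpos
  have h1 : ∫ u in Ioc (0:ℝ) u0, min mr (L * Real.exp (-u)) = mr * u0 := by
    rw [setIntegral_congr_fun measurableSet_Ioc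
      (fun u hu => min_eq_left ?_), setIntegral_const]
    · simp [Real.volume_Ioc, ENNReal.toReal_ofReal hu0nn, mul_comm, hu0nn]
    · have : Real.exp (-u0) ≤ Real.exp (-u) := Real.exp_le_exp.2 (by linarith [hu.2])
      calc mr = L * (mr / L) := by field_simp
        _ = L * Real.exp (-u0) := by rw [hexpu0]
        _ ≤ L * Real.exp (-u) := by nlinarith [Real.exp_pos (-u0)]
  have h2 : ∫ u in Ioi u0, min mr (L * Real.exp (-u)) = mr := by
    rw [setIntegral_congr_fun measurableSet_Ioi
      (fun u hu => min_eq_right ?_)]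
    · rw [MeasureTheory.integral_const_mul, integral_exp_neg_Ioi, hexpu0]
      field_simp
    · have : Real.exp (-u) ≤ Real.exp (-u0) :=
        Real.exp_le_exp.2 (by simp only [mem_Ioi] at hu; linarith)
      calc L * Real.exp (-u) ≤ L * Real.exp (-u0) := by
            nlinarith [Real.exp_pos (-u)]
        _ = mr := by rw [hexpu0]; field_simp
  have hlog : Real.log (Real.exp 1 * L / mr) = u0 + 1 := by
    rw [mul_div_assoc, Real.log_mul (Real.exp_ne_zero 1) (by positivity),
      Real.log_exp, hu0]
    ring
  rw [← hsplit, setIntegral_union hdisj measurableSet_Ioi hint1 hint2, h1, h2, hlog]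
  ring

/-- For `b ∈ (0,1]`, `R > 0`, a measurable `E ⊆ ℝ` and any `t ∈ ℝ`,
`∫_E ln⁺(3bR/|s−t|) ds ≤ min(λE, 6bR)·ln(6ebR/min(λE, 6bR))`. -/
theorem logplus_integral_bound (b R : ℝ) (hb : b ∈ Set.Ioc (0 : ℝ) 1) (hR : 0 < R)
    (E : Set ℝ) (hE : MeasurableSet E) (t : ℝ) :
    ∫ s in E, max 0 (Real.log (3 * b * R / |s - t|)) ≤
      (min (volume E) (ENNReal.ofReal (6 * b * R))).toReal *
        Real.log (6 * Real.exp 1 * b * R /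
          (min (volume E) (ENNReal.ofReal (6 * b * R))).toReal) := by
  obtain ⟨hb0, hb1⟩ := hb
  have hc : (0:ℝ) < 3 * b * R := by positivity
  have hL : (0:ℝ) < 6 * b * R := by positivity
  set c := 3 * b * R with hcdef
  set L := 6 * b * R with hLdef
  set M := volume E with hM
  set K := ENNReal.ofReal L with hK
  set m := min M K with hmdef
  have hm_ne_top : m ≠ ⊤ := by
    exact ((min_le_right M K).trans_lt ENNReal.ofReal_lt_top).ne
  set mr := m.toReal with hmr
  have hmrL : mr ≤ L := by
    have := ENNReal.toReal_mono ENNReal.ofReal_ne_top (min_le_right M K)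
    rwa [ENNReal.toReal_ofReal hL.le] at this
  have hmrnn : 0 ≤ mr := ENNReal.toReal_nonneg
  -- measurability of the integrand
  have hfm : Measurable fun s : ℝ => max 0 (Real.log (c / |s - t|)) := by
    apply measurable_const.max
    exact Real.measurable_log.comp
      (measurable_const.div ((measurable_id.sub measurable_const).abs))
  have hfnn : ∀ s : ℝ, 0 ≤ max 0 (Real.log (c / |s - t|)) := fun s => le_max_left _ _
  rcases eq_or_lt_of_le hmrnn with hmr0 | hmrpos
  · -- volume E = 0 case
    have hm0 : m = 0 := by
      rcases (ENNReal.toReal_eq_zero_iff m).1 hmr0.symm with h | h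
      · exact h
      · exact absurd h hm_ne_top
    have hK0 : K ≠ 0 := (ENNReal.ofReal_pos.2 hL).ne'
    have hM0 : M = 0 := by
      rcases min_eq_iff.1 hm0 with h | h
      · exact h.1
      · exact absurd h.1 hK0
    have : volume.restrict E = 0 := by
      rw [Measure.restrict_eq_zero]; exact hM0.symm ▸ hM0
    rw [this]
    simp [← hmr0]
  · -- main case
    have hlognn : 0 ≤ Real.log (6 * Real.exp 1 * b * R / mr) := by
      apply Real.log_nonneg
      rw [le_div_iff₀ hmrpos]
      have h1 : (1:ℝ) ≤ Real.exp 1 := by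
        have := Real.add_one_le_exp 1; linarith
      nlinarith
    have hRHSnn : 0 ≤ mr * Real.log (6 * Real.exp 1 * b * R / mr) :=
      mul_nonneg hmrnn hlognn
    rw [integral_eq_lintegral_of_nonneg_ae
      (Filter.Eventually.of_forall hfnn) hfm.aestronglyMeasurable]
    refine ENNReal.toReal_le_of_le_ofReal hRHSnn ?_
    rw [lintegral_eq_lintegral_meas_lt _
      (Filter.Eventually.of_forall hfnn) hfm.aemeasurable]
    have key : ∀ u ∈ Ioi (0:ℝ),
        (volume.restrict E) {s : ℝ | u < max 0 (Real.log (c / |s - t|))} ≤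
          ENNReal.ofReal (min mr (L * Real.exp (-u))) := by
      intro u hu
      simp only [mem_Ioi] at hu
      have hSmeas : MeasurableSet {s : ℝ | u < max 0 (Real.log (c / |s - t|))} :=
        measurableSet_lt measurable_const hfm
      rw [Measure.restrict_apply hSmeas]
      have hsub : {s : ℝ | u < max 0 (Real.log (c / |s - t|))} ⊆
          Ioo (t - c * Real.exp (-u)) (t + c * Real.exp (-u)) := by
        intro s hs
        simp only [mem_setOf_eq] at hs
        have hlog : u < Real.log (c / |s - t|) := by
          rcases lt_max_iff.1 hs with h | h
          · linarith
          · exact h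
        have hst : s ≠ t := by
          intro h; rw [h] at hlog; simp at hlog; linarith
        have habs : 0 < |s - t| := abs_pos.2 (sub_ne_zero.2 hst)
        have hpos : 0 < c / |s - t| := by positivity
        have : Real.exp u < c / |s - t| := by
          have := Real.exp_lt_exp.2 hlog
          rwa [Real.exp_log hpos] at this
        have habslt : |s - t| < c * Real.exp (-u) := by
          rw [Real.exp_neg]
          rw [lt_div_iff₀ habs] at this
          calc |s - t| = Real.exp u * |s - t| * (Real.exp u)⁻¹ := by
                field_simp
            _ < c * (Real.exp u)⁻¹ := by
                apply mul_lt_mul_of_pos_right this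
                positivity
        constructor
        · have := abs_lt.1 habslt; linarith [this.1]
        · have := abs_lt.1 habslt; linarith [this.2]
      have hX : volume {s : ℝ | u < max 0 (Real.log (c / |s - t|))} ≤
          ENNReal.ofReal (L * Real.exp (-u)) := by
        calc volume {s : ℝ | u < max 0 (Real.log (c / |s - t|))}
            ≤ volume (Ioo (t - c * Real.exp (-u)) (t + c * Real.exp (-u))) :=
              measure_mono hsub
          _ = ENNReal.ofReal (L * Real.exp (-u)) := by
              rw [Real.volume_Ioo]
              congr 1
              rw [hLdef, hcdef]
              ring
      have hle1 : volume ({s : ℝ | u < max 0 (Real.log (c / |s - t|))} ∩ E) ≤ M :=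
        measure_mono inter_subset_right
      have hle2 : volume ({s : ℝ | u < max 0 (Real.log (c / |s - t|))} ∩ E) ≤
          ENNReal.ofReal (L * Real.exp (-u)) :=
        le_trans (measure_mono inter_subset_left) hX
      have hXK : ENNReal.ofReal (L * Real.exp (-u)) ≤ K := by
        rw [hK]
        apply ENNReal.ofReal_le_ofReal
        nlinarith [Real.exp_pos (-u), Real.exp_le_one_iff.2 (by linarith : -u ≤ 0)]
      calc volume ({s : ℝ | u < max 0 (Real.log (c / |s - t|))} ∩ E)
          ≤ min M (ENNReal.ofReal (L * Real.exp (-u))) := le_min hle1 hle2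
        _ = min m (ENNReal.ofReal (L * Real.exp (-u))) := by
            rw [hmdef, min_assoc, min_eq_right hXK]
        _ = ENNReal.ofReal (min mr (L * Real.exp (-u))) := by
            have hmono : Monotone ENNReal.ofReal := fun x y h => ENNReal.ofReal_le_ofReal h
            rw [hmono.map_min, hmr, ENNReal.ofReal_toReal hm_ne_top]
    calc ∫⁻ u in Ioi (0:ℝ), (volume.restrict E)
          {s : ℝ | u < max 0 (Real.log (c / |s - t|))}
        ≤ ∫⁻ u in Ioi (0:ℝ), ENNReal.ofReal (min mr (L * Real.exp (-u))) := by
          refine lintegral_mono_ae ?_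
          filter_upwards [ae_restrict_mem measurableSet_Ioi] with u hu
          exact key u hu
      _ = ENNReal.ofReal (∫ u in Ioi (0:ℝ), min mr (L * Real.exp (-u))) :=
          (ofReal_integral_eq_lintegral_ofReal
            (aux_integrableOn_min_exp mr L 0 hmrnn hL)
            (Filter.Eventually.of_forall fun u =>
              le_min hmrnn (by positivity))).symm
      _ = ENNReal.ofReal (mr * Real.log (Real.exp 1 * L / mr)) := by
          rw [aux_min_exp_integral L mr hmrpos hmrL]
      _ = ENNReal.ofReal (mr * Real.log (6 * Real.exp 1 * b * R / mr)) := by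
          congr 2
          rw [hLdef]; ring_nf
end

section
/- Let μ be a positive measure on ℝ supported in [0, ∞) with distribution function n(t) := μ([0, t]) finite for all t, let b ∈ (0, 1/2], 0 ≤ r < R, and let E ⊆ [r, R] be measurable. Then ∫_r^R [∫_{(1−b)x}^{(1+b)x} ln(bx/|t−x|) dn(t)] 1_E(x) dx ≤ n((1+b)R) · sup_{t ∈ ℝ} ∫_ℝ 1_E(x) · max(0, ln(3bR/|x−t|)) dx. -/
open MeasureTheory Set Real
open scoped ENNReal


lemma helper_intOn_log (c : ℝ) : IntegrableOn Real.log (Set.Ioc 0 c) volume := by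
  have h2 : IntegrableOn Real.log (Set.Ioc 0 1) volume := by
    have h : IntegrableOn (fun u : ℝ => -Real.log u) (Set.Ioc 0 1) volume := by
      apply intervalIntegral.integrableOn_deriv_of_nonneg (g := fun u : ℝ => u - u * Real.log u)
      · fun_prop
      · intro x hx
        have h1 := (hasDerivAt_id x).sub (Real.hasDerivAt_mul_log hx.1.ne')
        have he : (1 : ℝ) - (Real.log x + 1) = -Real.log x := by ring
        rwa [he] at h1
      · intro x hx
        simp only [neg_nonneg]
        exact Real.log_nonpos hx.1.le hx.2.le
    exact h.neg.congr (Filter.Eventually.of_forall fun x => neg_neg _)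
  have h3 : IntegrableOn Real.log (Set.Ioc 1 (max 1 c)) volume := by
    apply (ContinuousOn.integrableOn_Icc ?_).mono_set Set.Ioc_subset_Icc_self
    exact fun x hx => (Real.continuousAt_log (by intro h; rw [h] at hx; exact absurd hx.1 (by norm_num) : x ≠ 0)).continuousWithinAt
  have h4 := h2.union h3
  rw [Set.Ioc_union_Ioc_eq_Ioc zero_le_one (le_max_left 1 c)] at h4
  exact h4.mono_set (Set.Ioc_subset_Ioc_right (le_max_right 1 c))

lemma helper_f_meas {a : ℝ} : Measurable (fun u : ℝ => max 0 (Real.log (a / |u|))) := by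
  measurability

lemma helper_f_integrable {a : ℝ} (ha : 0 < a) :
    Integrable (fun u : ℝ => max 0 (Real.log (a / |u|))) volume := by
  set f : ℝ → ℝ := fun u => max 0 (Real.log (a / |u|)) with hf_def
  have hmeas : Measurable f := helper_f_meas
  -- integrability of log |u| on Icc (-a) a
  have Ipos : IntegrableOn (fun u : ℝ => Real.log |u|) (Set.Icc 0 a) volume := by
    rw [integrableOn_Icc_iff_integrableOn_Ioc]
    exact (helper_intOn_log a).congr_fun (fun u hu => by rw [abs_of_pos hu.1]) measurableSet_Ioc
  have Ineg : IntegrableOn (fun u : ℝ => Real.log |u|) (Set.Icc (-a) 0) volume := by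
    have h := (Ipos.integrable_indicator measurableSet_Icc).comp_neg
    rw [← integrable_indicator_iff measurableSet_Icc]
    apply h.congr
    refine Filter.Eventually.of_forall fun x => ?_
    by_cases hx : x ∈ Set.Icc (-a) 0
    · have : -x ∈ Set.Icc (0:ℝ) a := ⟨by linarith [hx.2], by linarith [hx.1]⟩
      simp only [Set.indicator_of_mem this, Set.indicator_of_mem hx, abs_neg]
    · have : -x ∉ Set.Icc (0:ℝ) a := by
        intro h'; exact hx ⟨by linarith [h'.2], by linarith [h'.1]⟩
      simp only [Set.indicator_of_notMem this, Set.indicator_of_notMem hx]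
  have Ilog : IntegrableOn (fun u : ℝ => Real.log |u|) (Set.Icc (-a) a) volume := by
    have := Ineg.union Ipos
    rwa [Set.Icc_union_Icc_eq_Icc (neg_nonpos.mpr ha.le) ha.le] at this
  have Ibound : IntegrableOn (fun u : ℝ => |Real.log a| + |Real.log (abs u)|) (Set.Icc (-a) a) volume :=
    (integrableOn_const measure_Icc_lt_top.ne).add Ilog.abs
  have IfIcc : IntegrableOn f (Set.Icc (-a) a) volume := by
    apply Ibound.integrable.mono hmeas.aestronglyMeasurable.restrict
    refine Filter.Eventually.of_forall fun u => ?_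
    rw [Real.norm_eq_abs, Real.norm_eq_abs, abs_of_nonneg (le_max_left _ _),
      abs_of_nonneg (by positivity : (0:ℝ) ≤ |Real.log a| + |Real.log (abs u)|)]
    by_cases hu : u = 0
    · simp [hf_def, hu, Real.log_zero]
    · have h1 : Real.log (a / |u|) = Real.log a - Real.log |u| :=
        Real.log_div ha.ne' (abs_ne_zero.2 hu)
      calc f u ≤ |Real.log (a / |u|)| := max_le (abs_nonneg _) (le_abs_self _)
        _ = |Real.log a - Real.log (abs u)| := by rw [h1]
        _ ≤ |Real.log a| + |Real.log (abs u)| := abs_sub _ _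
  have hsupp : Function.support f ⊆ Set.Icc (-a) a := by
    intro u hu
    by_contra hmem
    apply hu
    have habs : a < |u| := by
      rcases lt_or_ge a |u| with h | h
      · exact h
      · exact absurd ⟨by rcases abs_le.1 h with ⟨h1, _⟩; exact h1, (abs_le.1 h).2⟩ hmem
    have : a / |u| ≤ 1 := (div_le_one (ha.trans habs)).2 habs.le
    simp [hf_def, Real.log_nonpos (by positivity) this]
  rw [← Set.indicator_eq_self.2 hsupp]
  exact IfIcc.integrable_indicator measurableSet_Icc

lemma helper_ofReal_int_le {α : Type*} [MeasurableSpace α] (ν : Measure α) (f : α → ℝ) :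
    ENNReal.ofReal (∫ x, f x ∂ν) ≤ ∫⁻ x, ENNReal.ofReal (f x) ∂ν := by
  by_cases hf : Integrable f ν
  · have hpos : Integrable (fun x => max (f x) 0) ν := hf.pos_part
    have h1 : ∫ x, f x ∂ν ≤ ∫ x, max (f x) 0 ∂ν :=
      integral_mono hf hpos (fun x => le_max_left _ _)
    calc ENNReal.ofReal (∫ x, f x ∂ν) ≤ ENNReal.ofReal (∫ x, max (f x) 0 ∂ν) :=
          ENNReal.ofReal_le_ofReal h1
      _ = ∫⁻ x, ENNReal.ofReal (max (f x) 0) ∂ν :=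
          ofReal_integral_eq_lintegral_ofReal hpos (Filter.Eventually.of_forall fun x => le_max_right _ _)
      _ = ∫⁻ x, ENNReal.ofReal (f x) ∂ν := by
          refine lintegral_congr fun x => ?_
          rcases le_total (f x) 0 with h | h
          · rw [max_eq_right h, ENNReal.ofReal_zero, ENNReal.ofReal_of_nonpos h]
          · rw [max_eq_left h]
  · rw [integral_undef hf]
    simp

lemma helper_log_le {u v : ℝ} (hu : 0 ≤ u) (huv : u ≤ v) :
    Real.log u ≤ max 0 (Real.log v) := by
  rcases le_or_gt u 1 with h | h
  · exact le_max_of_le_left (Real.log_nonpos hu h)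
  · exact le_max_of_le_right (Real.log_le_log (by linarith) huv)


/-- The key double-integral estimate: for a positive measure `μ` on `ℝ`
supported in `[0,∞)` with finite counting function `n(t) = μ([0,t])`,
`b ∈ (0,1/2]`, `0 ≤ r < R` and measurable `E ⊆ [r,R]`,
`∫_r^R (∫_{(1−b)x}^{(1+b)x} ln(bx/|t−x|) dμ(t)) 1_E(x) dx
  ≤ n((1+b)R) · sup_{t∈ℝ} ∫_E ln⁺(3bR/|x−t|) dx`. -/
theorem double_integral_estimate (μ : Measure ℝ)
    (hsupp : μ (Set.Iio (0:ℝ)) = 0) (hfin : ∀ t : ℝ, μ (Set.Icc 0 t) ≠ ⊤)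
    (b r R : ℝ) (hb : b ∈ Set.Ioc (0 : ℝ) (1/2)) (hr : 0 ≤ r) (hrR : r < R)
    (E : Set ℝ) (hE : MeasurableSet E) (hER : E ⊆ Set.Icc r R) :
    (∫ x in Set.Icc r R,
        (∫ t in Set.Icc ((1 - b) * x) ((1 + b) * x), Real.log (b * x / |t - x|) ∂μ) *
          Set.indicator E (fun _ => (1:ℝ)) x) ≤
      (μ (Set.Icc 0 ((1 + b) * R))).toReal *
        ⨆ t : ℝ, ∫ x in E, max 0 (Real.log (3 * b * R / |x - t|)) := by
  obtain ⟨hb0, hb2⟩ := hb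
  have hR : 0 < R := lt_of_le_of_lt hr hrR
  have ha : 0 < 3 * b * R := by positivity
  set f : ℝ → ℝ := fun u => max 0 (Real.log (3 * b * R / |u|)) with hf_def
  have hf0 : ∀ u, 0 ≤ f u := fun u => le_max_left _ _
  have hf_int : Integrable f volume := helper_f_integrable ha
  set T : Set ℝ := Set.Icc (0:ℝ) ((1 + b) * R) with hT_def
  have hμT : μ T ≠ ⊤ := hfin _
  haveI hfinT : IsFiniteMeasure (μ.restrict T) :=
    ⟨by rw [Measure.restrict_apply_univ]; exact lt_top_iff_ne_top.2 hμT⟩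
  set C : ℝ := ⨆ t : ℝ, ∫ x in E, max 0 (Real.log (3 * b * R / |x - t|)) with hC_def
  have hint_t : ∀ t : ℝ, Integrable (fun x => f (x - t)) volume :=
    fun t => hf_int.comp_sub_right t
  have hle_M : ∀ t : ℝ, (∫ x in E, max 0 (Real.log (3 * b * R / |x - t|))) ≤ ∫ u, f u := by
    intro t
    calc (∫ x in E, max 0 (Real.log (3 * b * R / |x - t|)))
        = ∫ x in E, f (x - t) := rfl
      _ ≤ ∫ x, f (x - t) :=
          setIntegral_le_integral (hint_t t) (Filter.Eventually.of_forall fun x => hf0 _)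
      _ = ∫ u, f u := integral_sub_right_eq_self f t
  have hbdd : BddAbove (Set.range fun t : ℝ => ∫ x in E, max 0 (Real.log (3 * b * R / |x - t|))) :=
    ⟨∫ u, f u, by rintro _ ⟨t, rfl⟩; exact hle_M t⟩
  have hC_ge : ∀ t : ℝ, (∫ x in E, max 0 (Real.log (3 * b * R / |x - t|))) ≤ C :=
    fun t => le_ciSup hbdd t
  have hC0 : 0 ≤ C :=
    le_trans (integral_nonneg fun x => le_max_left _ _) (hC_ge 0)
  have hRHS0 : 0 ≤ (μ T).toReal * C := mul_nonneg ENNReal.toReal_nonneg hC0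
  rw [show (μ (Set.Icc 0 ((1 + b) * R))) = μ T from rfl]
  have key : ENNReal.ofReal (∫ x in Set.Icc r R,
      (∫ t in Set.Icc ((1 - b) * x) ((1 + b) * x), Real.log (b * x / |t - x|) ∂μ) *
        Set.indicator E (fun _ => (1:ℝ)) x) ≤ μ T * ENNReal.ofReal C := by
    calc ENNReal.ofReal (∫ x in Set.Icc r R,
          (∫ t in Set.Icc ((1 - b) * x) ((1 + b) * x), Real.log (b * x / |t - x|) ∂μ) *
            Set.indicator E (fun _ => (1:ℝ)) x)
        ≤ ∫⁻ x in Set.Icc r R, ENNReal.ofReal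
            ((∫ t in Set.Icc ((1 - b) * x) ((1 + b) * x), Real.log (b * x / |t - x|) ∂μ) *
              Set.indicator E (fun _ => (1:ℝ)) x) := helper_ofReal_int_le _ _
      _ ≤ ∫⁻ x in Set.Icc r R,
            Set.indicator E (fun x => ∫⁻ t in T, ENNReal.ofReal (f (x - t)) ∂μ) x := by
          apply lintegral_mono
          intro x
          show ENNReal.ofReal ((∫ t in Set.Icc ((1 - b) * x) ((1 + b) * x),
              Real.log (b * x / |t - x|) ∂μ) * Set.indicator E (fun _ => (1:ℝ)) x) ≤
            Set.indicator E (fun x => ∫⁻ t in T, ENNReal.ofReal (f (x - t)) ∂μ) x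
          by_cases hx : x ∈ E
          · rw [Set.indicator_of_mem hx, Set.indicator_of_mem hx, mul_one]
            obtain ⟨hx0', hxR⟩ := hER hx
            have hx0 : 0 ≤ x := hr.trans hx0'
            calc ENNReal.ofReal (∫ t in Set.Icc ((1 - b) * x) ((1 + b) * x),
                  Real.log (b * x / |t - x|) ∂μ)
                ≤ ∫⁻ t in Set.Icc ((1 - b) * x) ((1 + b) * x),
                    ENNReal.ofReal (Real.log (b * x / |t - x|)) ∂μ := helper_ofReal_int_le _ _
              _ ≤ ∫⁻ t in Set.Icc ((1 - b) * x) ((1 + b) * x),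
                    ENNReal.ofReal (f (x - t)) ∂μ := by
                  apply lintegral_mono
                  intro t
                  apply ENNReal.ofReal_le_ofReal
                  show Real.log (b * x / |t - x|) ≤ max 0 (Real.log (3 * b * R / |x - t|))
                  rw [abs_sub_comm x t]
                  rcases eq_or_lt_of_le (abs_nonneg (t - x)) with hd | hd
                  · rw [← hd, div_zero, div_zero, Real.log_zero]
                    exact le_max_left _ _
                  · exact helper_log_le (div_nonneg (by positivity) (abs_nonneg _))
                      ((div_le_div_iff_of_pos_right hd).2 (by nlinarith))
              _ ≤ ∫⁻ t in T, ENNReal.ofReal (f (x - t)) ∂μ := by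
                  apply lintegral_mono_set
                  intro t ht
                  exact ⟨le_trans (mul_nonneg (by linarith) hx0) ht.1,
                    le_trans ht.2 (mul_le_mul_of_nonneg_left hxR (by linarith))⟩
          · simp [Set.indicator_of_notMem hx]
      _ ≤ ∫⁻ x, Set.indicator E (fun x => ∫⁻ t in T, ENNReal.ofReal (f (x - t)) ∂μ) x :=
          setLIntegral_le_lintegral _ _
      _ = ∫⁻ x in E, ∫⁻ t in T, ENNReal.ofReal (f (x - t)) ∂μ := lintegral_indicator hE _
      _ = ∫⁻ t in T, (∫⁻ x in E, ENNReal.ofReal (f (x - t))) ∂μ := by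
          exact lintegral_lintegral_swap
            (((helper_f_meas.comp (measurable_fst.sub measurable_snd)).ennreal_ofReal).aemeasurable)
      _ ≤ ∫⁻ _ in T, ENNReal.ofReal C ∂μ := by
          refine lintegral_mono fun t => ?_
          rw [← ofReal_integral_eq_lintegral_ofReal ((hint_t t).restrict)
            (Filter.Eventually.of_forall fun x => hf0 _)]
          exact ENNReal.ofReal_le_ofReal (hC_ge t)
      _ = ENNReal.ofReal C * μ T := setLIntegral_const _ _
      _ = μ T * ENNReal.ofReal C := mul_comm _ _
  rw [← ENNReal.ofReal_toReal hμT, ← ENNReal.ofReal_mul ENNReal.toReal_nonneg] at key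
  exact (ENNReal.ofReal_le_ofReal_iff hRHS0).1 key
end
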